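/- For every j ∈ {1, …, N} and every natural number k, the even moments of the self-adjoint element L_j + L_j* in the vacuum state are given by ⟨(L_j + L_j*)^{2k} δ_e, δ_e⟩ = catalan(k), the k-th Catalan number; that is, each L_j + L_j* is a standard semicircular random variable with respect to the vacuum state. -/

import Mathlib

noncomputable section

/-- The Hilbert space `ℓ²(FreeMonoid (Fin N), ℂ)`. -/
abbrev FMH (N : ℕ) : Type := lp (fun _ : FreeMonoid (Fin N) => ℂ) 2

/-- The standard orthonormal basis vector `δ_w` at the word `w`. -/
noncomputable def delta (N : ℕ) (w : FreeMonoid (Fin N)) : FMH N :=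
  letI : DecidableEq (FreeMonoid (Fin N)) := Classical.decEq _
  lp.single 2 w 1

lemma delta_coeff_self (N : ℕ) (v : FreeMonoid (Fin N)) :
    (delta N v : ∀ _ : FreeMonoid (Fin N), ℂ) v = 1 := by
  letI : DecidableEq (FreeMonoid (Fin N)) := Classical.decEq _
  exact lp.single_apply_self (E := fun _ : FreeMonoid (Fin N) => ℂ) 2 v (1 : ℂ)

lemma delta_coeff_ne (N : ℕ) {u v : FreeMonoid (Fin N)} (h : u ≠ v) :
    (delta N v : ∀ _ : FreeMonoid (Fin N), ℂ) u = 0 := by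
  letI : DecidableEq (FreeMonoid (Fin N)) := Classical.decEq _
  exact lp.single_apply_ne (E := fun _ : FreeMonoid (Fin N) => ℂ) 2 v (1 : ℂ) h

lemma inner_delta_left (N : ℕ) (u : FreeMonoid (Fin N)) (f : FMH N) :
    (inner ℂ (delta N u) f : ℂ) = f u := by
  letI : DecidableEq (FreeMonoid (Fin N)) := Classical.decEq _
  rw [delta, lp.inner_single_left]
  simp

lemma delta_inner_self (N : ℕ) (v : FreeMonoid (Fin N)) :
    (inner ℂ (delta N v) (delta N v) : ℂ) = 1 := by
  rw [inner_delta_left, delta_coeff_self]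

lemma delta_inner_ne (N : ℕ) {u v : FreeMonoid (Fin N)} (h : u ≠ v) :
    (inner ℂ (delta N u) (delta N v) : ℂ) = 0 := by
  rw [inner_delta_left, delta_coeff_ne N h]

lemma delta_ext (N : ℕ) {f g : FMH N}
    (h : ∀ u, (inner ℂ (delta N u) f : ℂ) = inner ℂ (delta N u) g) : f = g := by
  apply lp.ext
  funext u
  have := h u
  rwa [inner_delta_left, inner_delta_left] at this

lemma adj_delta_cons {N : ℕ} (L : FreeMonoid (Fin N) → (FMH N →L[ℂ] FMH N))
    (hL : ∀ w h : FreeMonoid (Fin N), L w (delta N h) = delta N (w * h)) (j : Fin N)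
    (h : FreeMonoid (Fin N)) :
    ContinuousLinearMap.adjoint (L (FreeMonoid.of j)) (delta N (FreeMonoid.of j * h))
      = delta N h := by
  apply delta_ext
  intro u
  rw [ContinuousLinearMap.adjoint_inner_right, hL]
  by_cases hu : u = h
  · subst hu; rw [delta_inner_self, delta_inner_self]
  · rw [delta_inner_ne N hu, delta_inner_ne N (fun hc => hu (mul_left_cancel hc))]

lemma adj_delta_one {N : ℕ} (L : FreeMonoid (Fin N) → (FMH N →L[ℂ] FMH N))
    (hL : ∀ w h : FreeMonoid (Fin N), L w (delta N h) = delta N (w * h)) (j : Fin N) :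
    ContinuousLinearMap.adjoint (L (FreeMonoid.of j)) (delta N 1) = 0 := by
  apply delta_ext
  intro u
  rw [ContinuousLinearMap.adjoint_inner_right, hL, inner_zero_right]
  refine delta_inner_ne N fun hc => ?_
  exact List.cons_ne_nil j (FreeMonoid.toList u) (congrArg FreeMonoid.toList hc)

/-- Number of nonnegative ±1 walks of length `n` from `0` to `m`. -/
def Wlk : ℕ → ℕ → ℕ
  | 0, 0 => 1
  | 0, _+1 => 0
  | n+1, 0 => Wlk n 1
  | n+1, m+1 => Wlk n m + Wlk n (m+2)

lemma Wlk_eq_zero_of_lt : ∀ n m, n < m → Wlk n m = 0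
  | 0, _+1, _ => rfl
  | n+1, m+1, h => by
      rw [Wlk]
      rw [Wlk_eq_zero_of_lt n m (by omega), Wlk_eq_zero_of_lt n (m+2) (by omega)]

lemma Wlk_eq_zero_of_odd : ∀ n m, (n + m) % 2 = 1 → Wlk n m = 0
  | 0, 0, h => by omega
  | 0, _+1, _ => rfl
  | n+1, 0, h => Wlk_eq_zero_of_odd n 1 (by omega)
  | n+1, m+1, h => by
      rw [Wlk, Wlk_eq_zero_of_odd n m (by omega), Wlk_eq_zero_of_odd n (m+2) (by omega)]

lemma choose_succ_le_choose {n u : ℕ} (h : n ≤ 2 * u) : n.choose (u + 1) ≤ n.choose u := by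
  rcases le_or_gt n u with hnu | hun
  · rw [Nat.choose_eq_zero_of_lt (by omega)]; exact Nat.zero_le _
  · have h1 : n - u - 1 < n / 2 := by omega
    have h2 := Nat.choose_le_succ_of_lt_half_left h1
    have e1 : n - (u + 1) = n - u - 1 := by omega
    have e2 : n - u - 1 + 1 = n - u := by omega
    rw [← Nat.choose_symm (by omega : u + 1 ≤ n), ← Nat.choose_symm (by omega : u ≤ n), e1]
    rw [e2] at h2
    exact h2

lemma pascal' (n v : ℕ) (hv : 0 < v) : (n+1).choose v = n.choose (v-1) + n.choose v := by
  have hv' : v = (v - 1) + 1 := by omega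
  conv_lhs => rw [hv']
  rw [Nat.choose_succ_succ, Nat.succ_eq_add_one, show v - 1 + 1 = v by omega]

lemma Wlk_closed : ∀ n m, m ≤ n → (n + m) % 2 = 0 →
    Wlk n m = n.choose ((n + m) / 2) - n.choose ((n + m) / 2 + 1)
  | 0, 0, _, _ => by simp [Wlk]
  | 0, _+1, h, _ => by omega
  | n+1, 0, h, hp => by
      simp only [Nat.add_zero]
      have hno : n % 2 = 1 := by omega
      have h1 : Wlk (n+1) 0 = Wlk n 1 := rfl
      have ih := Wlk_closed n 1 (by omega) (by omega)
      set u := (n + 1) / 2 with hu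
      rw [h1, ih]
      have h2u : 2 * u = n + 1 := by omega
      have hsym : n.choose (n - (u - 1)) = n.choose (u - 1) := Nat.choose_symm (by omega)
      have hsym' : n - (u - 1) = u := by omega
      rw [hsym'] at hsym
      have p1 := pascal' n u (by omega)
      have p2 : (n+1).choose (u+1) = n.choose u + n.choose (u+1) := Nat.choose_succ_succ n u
      have hle : n.choose (u + 1) ≤ n.choose u := choose_succ_le_choose (by omega)
      have hle2 : (n+1).choose (u + 1) ≤ (n+1).choose u := choose_succ_le_choose (by omega)
      omega
  | n+1, m+1, h, hp => by
      rw [Wlk]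
      set u := (n + 1 + (m + 1)) / 2 with hu
      have h2u : 2 * u = n + m + 2 := by omega
      have hmn : m ≤ n := by omega
      have ih1 := Wlk_closed n m hmn (by omega)
      have e2 : (n + m) / 2 + 1 = u := by omega
      have e1 : (n + m) / 2 = u - 1 := by omega
      rw [ih1, e2, e1]
      have hle1 : n.choose u ≤ n.choose (u - 1) := by
        have := choose_succ_le_choose (n := n) (u := u - 1) (by omega)
        rwa [show u - 1 + 1 = u by omega] at this
      have p1 := pascal' n u (by omega)
      have p2 : (n+1).choose (u+1) = n.choose u + n.choose (u+1) := Nat.choose_succ_succ n u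
      have hle : (n+1).choose (u+1) ≤ (n+1).choose u := choose_succ_le_choose (by omega)
      rcases Nat.lt_or_ge n (m + 2) with h2 | h2
      · rw [Wlk_eq_zero_of_lt n (m+2) h2]
        have hz1 : n.choose (u + 1) = 0 := Nat.choose_eq_zero_of_lt (by omega)
        have hz0 : n.choose u = 0 := Nat.choose_eq_zero_of_lt (by omega)
        omega
      · have ih2 := Wlk_closed n (m+2) h2 (by omega)
        rw [ih2, show (n + (m + 2)) / 2 = u by omega]
        have hle2 : n.choose (u + 1) ≤ n.choose u := choose_succ_le_choose (by omega)
        omega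

lemma Wlk_catalan (k : ℕ) : Wlk (2 * k) 0 = catalan k := by
  have h := Wlk_closed (2 * k) 0 (by omega) (by omega)
  have e : (2 * k + 0) / 2 = k := by omega
  rw [e] at h
  refine Nat.eq_of_mul_eq_mul_left (show 0 < k + 1 by omega) ?_
  rw [succ_mul_catalan_eq_centralBinom, Nat.centralBinom, h]
  have h1 : (2 * k).choose (k + 1) * (k + 1) = (2 * k).choose k * (2 * k - k) :=
    Nat.choose_succ_right_eq (2 * k) k
  have h2 : (2 * k).choose (k + 1) ≤ (2 * k).choose k := choose_succ_le_choose (by omega)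
  rw [show 2 * k - k = k by omega] at h1
  obtain ⟨t, ht⟩ := Nat.exists_eq_add_of_le h2
  rw [ht, Nat.add_sub_cancel_left]
  rw [ht] at h1
  have hb : (2 * k).choose (k + 1) = t * k := by nlinarith [h1]
  rw [hb]
  ring


lemma of_pow_ne_one {N : ℕ} (j : Fin N) {m : ℕ} (hm : m ≠ 0) :
    (FreeMonoid.of j) ^ m ≠ 1 := by
  cases m with
  | zero => exact absurd rfl hm
  | succ m =>
      rw [pow_succ']
      intro hc
      exact List.cons_ne_nil j (FreeMonoid.toList ((FreeMonoid.of j) ^ m))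
        (congrArg FreeMonoid.toList hc)

def Dvec (N : ℕ) (j : Fin N) : ℕ → FMH N
  | 0 => 0
  | m + 1 => delta N ((FreeMonoid.of j) ^ m)

set_option maxHeartbeats 1000000 in
lemma key_expansion {N : ℕ} (L : FreeMonoid (Fin N) → (FMH N →L[ℂ] FMH N))
    (hL : ∀ w h : FreeMonoid (Fin N), L w (delta N h) = delta N (w * h)) (j : Fin N) (n : ℕ) :
    ((L (FreeMonoid.of j) + ContinuousLinearMap.adjoint (L (FreeMonoid.of j))) ^ n)
        (delta N 1)
      = ∑ m ∈ Finset.range (n + 1), ((Wlk n m : ℂ)) • delta N ((FreeMonoid.of j) ^ m) := by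
  set A := L (FreeMonoid.of j) with hA
  set B := ContinuousLinearMap.adjoint (L (FreeMonoid.of j)) with hB
  set g := FreeMonoid.of j with hg
  have hAd : ∀ m : ℕ, A (delta N (g ^ m)) = delta N (g ^ (m + 1)) := by
    intro m
    rw [hA, hL, hg, ← pow_succ']
  have hBd : ∀ m : ℕ, B (delta N (g ^ (m + 1))) = delta N (g ^ m) := by
    intro m
    rw [pow_succ', hB, hg]
    exact adj_delta_cons L hL j _
  have hB0 : B (delta N (g ^ 0)) = 0 := by
    rw [pow_zero, hB, hg]
    exact adj_delta_one L hL j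
  induction n with
  | zero =>
      rw [pow_zero, ContinuousLinearMap.one_apply, Finset.sum_range_one, pow_zero]
      norm_num [Wlk]
  | succ n ih =>
      rw [pow_succ', ContinuousLinearMap.mul_apply, ih, map_sum]
      have hT : ∀ m : ℕ, (A + B) (delta N (g ^ m))
          = delta N (g ^ (m + 1)) +
            Dvec N j m := by
        intro m
        cases m with
        | zero =>
            rw [ContinuousLinearMap.add_apply, hAd, hB0]
            rfl
        | succ m' =>
            rw [ContinuousLinearMap.add_apply, hAd, hBd]
            rfl
      calc
        ∑ m ∈ Finset.range (n + 1),
            (A + B) ((Wlk n m : ℂ) • delta N (g ^ m))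
            = ∑ m ∈ Finset.range (n + 1),
              ((Wlk n m : ℂ) • delta N (g ^ (m + 1)) +
               (Wlk n m : ℂ) • Dvec N j m) := by
              refine Finset.sum_congr rfl fun m _ => ?_
              rw [map_smul, hT m, smul_add]
        _ = (∑ m ∈ Finset.range (n + 1), (Wlk n m : ℂ) • delta N (g ^ (m + 1))) +
            ∑ m ∈ Finset.range (n + 1),
              (Wlk n m : ℂ) • Dvec N j m :=
              Finset.sum_add_distrib
        _ = (∑ m ∈ Finset.range (n + 1), (Wlk n m : ℂ) • delta N (g ^ (m + 1))) +
            ∑ m ∈ Finset.range n, (Wlk n (m + 1) : ℂ) • delta N (g ^ m) := by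
              congr 1
              rw [Finset.sum_range_succ']
              simp [Dvec, hg]
        _ = (∑ m ∈ Finset.range (n + 1), (Wlk n m : ℂ) • delta N (g ^ (m + 1))) +
            ∑ m ∈ Finset.range (n + 2), (Wlk n (m + 1) : ℂ) • delta N (g ^ m) := by
              congr 1
              rw [Finset.sum_range_succ, Finset.sum_range_succ,
                Wlk_eq_zero_of_lt n (n + 1) (by omega),
                Wlk_eq_zero_of_lt n (n + 2) (by omega)]
              simp
        _ = ∑ m ∈ Finset.range (n + 1 + 1), (Wlk (n + 1) m : ℂ) • delta N (g ^ m) := by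
              rw [Finset.sum_range_succ' (fun m => (Wlk (n + 1) m : ℂ) • delta N (g ^ m)),
                Finset.sum_range_succ' (fun m => (Wlk n (m + 1) : ℂ) • delta N (g ^ m))]
              have e : ∀ m : ℕ, Wlk (n + 1) (m + 1) = Wlk n m + Wlk n (m + 2) := fun m => rfl
              have e0 : Wlk (n + 1) 0 = Wlk n 1 := rfl
              simp only [e, e0, Nat.cast_add, add_smul, Finset.sum_add_distrib]
              abel


/-- The even vacuum moments of `L_j + L_j*` are the Catalan numbers:
`⟨(L_j + L_j*)^{2k} δ_e, δ_e⟩ = catalan k`, i.e. each `L_j + L_j*` is a standard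
semicircular variable in the vacuum state. -/
theorem semicircular_even_moments (N : ℕ) (hN : 0 < N)
    (L : FreeMonoid (Fin N) → (FMH N →L[ℂ] FMH N))
    (hL : ∀ w h : FreeMonoid (Fin N), L w (delta N h) = delta N (w * h))
    (j : Fin N) (k : ℕ) :
    (inner ℂ
        (((L (FreeMonoid.of j) + ContinuousLinearMap.adjoint (L (FreeMonoid.of j))) ^ (2 * k))
          (delta N 1))
        (delta N 1) : ℂ) = (catalan k : ℂ) := by
  rw [key_expansion L hL j (2 * k), sum_inner]
  rw [Finset.sum_eq_single 0]
  · rw [inner_smul_left, pow_zero, delta_inner_self]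
    rw [mul_one, ← Wlk_catalan k]
    simp
  · intro m _ hm
    rw [inner_smul_left, delta_inner_ne N (of_pow_ne_one j hm), mul_zero]
  · intro h
    exact absurd (Finset.mem_range.mpr (by omega)) h
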